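/- Let h be a natural number with h = 2 or h odd and h ≥ 3, let k ≥ 1, and set N = h·2^k. Then 2^{d(N−2)+1} = 2^{d(N)} + ∑_{i=1}^{k−1} 2^{d(N−2^{i+1})+1}; here every exponent d(N−2)+1, d(N), and d(N−2^{i+1})+1 (for 1 ≤ i ≤ k−1) is a non-negative integer, so all powers of 2 are natural numbers. -/

import Mathlib

/-- For `m ≥ 1` with 2-adic expansion `m = 2^{a₁} + … + 2^{a_k}` (`a₁ > … > a_k ≥ 0`),
`d m = a₁ + k - 3 = ⌊log₂ m⌋ + s₂(m) - 3`, where `s₂(m)` is the number of ones in the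
binary expansion of `m`. -/
def d (m : ℕ) : ℤ :=
  (Nat.log 2 m : ℤ) + ((Nat.digits 2 m).sum : ℤ) - 3

private def F (n : ℕ) : ℕ := Nat.log 2 n + (Nat.digits 2 n).sum

private lemma F_two_mul {m : ℕ} (hm : m ≠ 0) : F (2 * m) = F m + 1 := by
  unfold F
  rw [Nat.digits_def' (by norm_num : (1:ℕ) < 2)
    (by have := Nat.pos_of_ne_zero hm; omega)]
  have h1 : 2 * m % 2 = 0 := Nat.mul_mod_right 2 m
  have h2 : 2 * m / 2 = m := by omega
  rw [h1, h2, mul_comm, Nat.log_mul_base (by norm_num) hm]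
  simp; ring

private lemma log_two_mul_add_one {m : ℕ} (hm : m ≠ 0) :
    Nat.log 2 (2 * m + 1) = Nat.log 2 m + 1 := by
  have h1 : 2 ^ (Nat.log 2 m + 1) ≤ 2 * m + 1 := by
    have := Nat.pow_log_le_self 2 hm
    rw [pow_succ]; omega
  have h2 : 2 * m + 1 < 2 ^ (Nat.log 2 m + 1 + 1) := by
    have := Nat.lt_pow_succ_log_self (by norm_num : 1 < 2) m
    rw [pow_succ, pow_succ]; omega
  exact Nat.log_eq_of_pow_le_of_lt_pow h1 h2

private lemma F_two_mul_add_one {m : ℕ} (hm : m ≠ 0) : F (2 * m + 1) = F m + 2 := by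
  unfold F
  rw [Nat.digits_def' (by norm_num : (1:ℕ) < 2) (by omega)]
  have h1 : (2 * m + 1) % 2 = 1 := by omega
  have h2 : (2 * m + 1) / 2 = m := by omega
  rw [h1, h2, log_two_mul_add_one hm]
  simp; ring

private lemma F_pow_mul {m : ℕ} (hm : m ≠ 0) : ∀ a, F (2 ^ a * m) = F m + a := by
  intro a
  induction a with
  | zero => simp
  | succ n ih =>
    have : 2 ^ (n + 1) * m = 2 * (2 ^ n * m) := by ring
    rw [this, F_two_mul (by positivity), ih]; omega

private lemma F_sub_one (h : ℕ) (hh : h = 2 ∨ (Odd h ∧ 3 ≤ h)) :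
    ∀ t, F (h * 2 ^ t - 1) + 1 = F h + 2 * t := by
  intro t
  induction t with
  | zero =>
    simp only [pow_zero, mul_one, Nat.mul_zero, Nat.add_zero]
    rcases hh with rfl | ⟨⟨j, hj⟩, h3⟩
    · have : Nat.log 2 2 = 1 := by rw [show (2:ℕ) = 2^1 by norm_num]; exact Nat.log_pow (by norm_num) 1
      norm_num [F, this]
    · have hj' : h = 2 * j + 1 := by omega
      have hjne : j ≠ 0 := by omega
      have h1 : h - 1 = 2 * j := by omega
      rw [h1, hj', F_two_mul hjne, F_two_mul_add_one hjne]
  | succ n ih =>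
    have h2 : 2 ≤ h := by rcases hh with rfl | ⟨_, h3⟩ <;> omega
    have hx : 2 ≤ h * 2 ^ n := le_trans h2 (Nat.le_mul_of_pos_right _ (by positivity))
    have he : h * 2 ^ (n + 1) - 1 = 2 * (h * 2 ^ n - 1) + 1 := by
      have : h * 2 ^ (n + 1) = 2 * (h * 2 ^ n) := by ring
      omega
    rw [he, F_two_mul_add_one (by omega)]
    omega

private lemma F_ge_two (h : ℕ) (hh : h = 2 ∨ (Odd h ∧ 3 ≤ h)) : 2 ≤ F h := by
  rcases hh with rfl | ⟨⟨j, hj⟩, h3⟩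
  · have : Nat.log 2 2 = 1 := by rw [show (2:ℕ) = 2^1 by norm_num]; exact Nat.log_pow (by norm_num) 1
    norm_num [F, this]
  · have hj' : h = 2 * j + 1 := by omega
    have hjne : j ≠ 0 := by omega
    rw [hj', F_two_mul_add_one hjne]
    omega

private lemma key : ∀ (K E : ℕ), (2:ℕ) ^ (E + 2 * K)
    = 2 ^ (E + K) + ∑ i ∈ Finset.Icc 1 K, 2 ^ (E + K + (K - i)) := by
  intro K
  induction K with
  | zero => intro E; simp
  | succ n ih =>
    intro E
    rw [Finset.sum_Icc_succ_top (by omega : 1 ≤ n + 1)]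
    have hcongr : ∑ i ∈ Finset.Icc 1 n, 2 ^ (E + (n + 1) + (n + 1 - i)) =
        ∑ i ∈ Finset.Icc 1 n, 2 ^ ((E + 2) + n + (n - i)) := by
      refine Finset.sum_congr rfl fun i hi => ?_
      simp only [Finset.mem_Icc] at hi
      congr 1
      omega
    rw [hcongr]
    have p1 : E + 2 * (n + 1) = E + 2 + 2 * n := by ring
    have p2 : E + (n + 1) + (n + 1 - (n + 1)) = E + (n + 1) := by omega
    rw [p1, p2, ih (E + 2)]
    have p3 : E + 2 + n = (E + (n + 1)) + 1 := by ring
    rw [p3, pow_succ]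
    ring

private lemma hd (n : ℕ) : d n = (F n : ℤ) - 3 := by
  unfold d F; push_cast; ring

theorem stmt_16 (h k : ℕ) (hh : h = 2 ∨ (Odd h ∧ 3 ≤ h)) (hk : 1 ≤ k) :
    0 ≤ d (h * 2 ^ k - 2) + 1 ∧ 0 ≤ d (h * 2 ^ k) ∧
    (∀ i, 1 ≤ i → i ≤ k - 1 → 0 ≤ d (h * 2 ^ k - 2 ^ (i + 1)) + 1) ∧
    2 ^ (d (h * 2 ^ k - 2) + 1).toNat
      = 2 ^ (d (h * 2 ^ k)).toNat
        + ∑ i ∈ Finset.Icc 1 (k - 1), 2 ^ (d (h * 2 ^ k - 2 ^ (i + 1)) + 1).toNat := by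
  obtain ⟨K, rfl⟩ : ∃ K, k = K + 1 := ⟨k - 1, by omega⟩
  have h2 : 2 ≤ h := by rcases hh with rfl | ⟨_, h3⟩ <;> omega
  have hF2 := F_ge_two h hh
  -- F of N
  have hFN : F (h * 2 ^ (K + 1)) = F h + (K + 1) := by
    rw [mul_comm]; exact F_pow_mul (by omega) (K + 1)
  -- F of N - 2
  have hm1 : 2 ≤ h * 2 ^ K := le_trans h2 (Nat.le_mul_of_pos_right _ (by positivity))
  have he1 : h * 2 ^ (K + 1) - 2 = 2 * (h * 2 ^ K - 1) := by
    have : h * 2 ^ (K + 1) = 2 * (h * 2 ^ K) := by ring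
    omega
  have hFN2 : F (h * 2 ^ (K + 1) - 2) = F h + 2 * K := by
    rw [he1, F_two_mul (by omega)]
    have := F_sub_one h hh K
    omega
  -- F of N - 2^(i+1) for 1 ≤ i ≤ K
  have hFNi : ∀ i, 1 ≤ i → i ≤ K → F (h * 2 ^ (K + 1) - 2 ^ (i + 1)) + i = F h + 2 * K := by
    intro i hi1 hiK
    have hmi : 2 ≤ h * 2 ^ (K - i) := le_trans h2 (Nat.le_mul_of_pos_right _ (by positivity))
    have hei : h * 2 ^ (K + 1) - 2 ^ (i + 1) = 2 ^ (i + 1) * (h * 2 ^ (K - i) - 1) := by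
      have hmul : 2 ^ (i + 1) * (h * 2 ^ (K - i)) = h * 2 ^ (K + 1) := by
        rw [mul_comm (h) (2 ^ (K - i)), ← mul_assoc, ← pow_add, mul_comm]
        congr 2
        omega
      rw [Nat.mul_sub, mul_one, hmul]
    have hsub := F_sub_one h hh (K - i)
    rw [hei, F_pow_mul (by omega) (i + 1)]
    omega
  refine ⟨?_, ?_, ?_, ?_⟩
  · rw [hd]; omega
  · rw [hd]; omega
  · intro i hi1 hiK
    have := hFNi i hi1 (by omega)
    rw [hd]; omega
  · have e1 : (d (h * 2 ^ (K + 1) - 2) + 1).toNat = (F h - 2) + 2 * K := by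
      rw [hd]; omega
    have e2 : (d (h * 2 ^ (K + 1))).toNat = (F h - 2) + K := by
      rw [hd]; omega
    rw [e1, e2, Nat.add_sub_cancel]
    rw [Finset.sum_congr rfl (fun i hi => ?_)]
    · exact key K (F h - 2)
    · simp only [Finset.mem_Icc] at hi
      have := hFNi i hi.1 hi.2
      congr 1
      rw [hd]
      omega
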